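/- Each of the four matrices T₁, T₂, T₃, T₄ is orthogonal (T_jᵀ·T_j = I₈) and is an automorphism of the lattice Λ = M_gen·ℤ⁸: the matrix C_j = M_gen⁻¹·T_j·M_gen has all entries in ℤ and its inverse also has all entries in ℤ (i.e., C_j ∈ GL(8,ℤ), equivalently T_j maps Λ bijectively onto Λ). -/
import Mathlib

set_option maxHeartbeats 1000000


open Matrix

/-- The generator matrix of the E₈ lattice (scaled so roots have length 1/√2·√2 = 1). -/
noncomputable def Mgen : Matrix (Fin 8) (Fin 8) ℝ :=
  (1/2 : ℝ) • !![
    0, 0, 0, 0, 0, 0, 0, 1;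
    0, 0, 0, 0, 0, -1, 2, -1;
    -1, -1, 1, 1, -1, 0, 0, 0;
    1, -1, -1, 1, -1, 1, 0, 0;
    -1, 0, 0, 0, 0, 1, 0, -1;
    -1, 0, 0, 0, 0, 0, 0, 1;
    0, 1, -1, 1, -1, 0, 0, 0;
    0, -1, -1, 1, 1, -1, 0, 0]

/-- The generator `T1`. -/
noncomputable def T1 : Matrix (Fin 8) (Fin 8) ℝ :=
  (1/2 : ℝ) • !![
    1, 1, 0, 0, -1, 1, 0, 0;
    -1, 1, 0, 0, -1, -1, 0, 0;
    0, 0, 1, -1, 0, 0, 1, 1;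
    0, 0, 1, 1, 0, 0, 1, -1;
    1, 1, 0, 0, 1, -1, 0, 0;
    -1, 1, 0, 0, 1, 1, 0, 0;
    0, 0, -1, -1, 0, 0, 1, -1;
    0, 0, -1, 1, 0, 0, 1, 1]

/-- The generator `T2`. -/
noncomputable def T2 : Matrix (Fin 8) (Fin 8) ℝ :=
  (1/2 : ℝ) • !![
    1, 1, 0, 0, 1, 1, 0, 0;
    -1, 1, 0, 0, -1, 1, 0, 0;
    0, 0, 1, -1, 0, 0, 1, -1;
    0, 0, 1, 1, 0, 0, -1, -1;
    -1, 1, 0, 0, 1, -1, 0, 0;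
    -1, -1, 0, 0, 1, 1, 0, 0;
    0, 0, -1, 1, 0, 0, 1, -1;
    0, 0, 1, 1, 0, 0, 1, 1]

/-- The generator `T3`. -/
noncomputable def T3 : Matrix (Fin 8) (Fin 8) ℝ :=
  (1/2 : ℝ) • !![
    1, 1, -1, 1, 0, 0, 0, 0;
    -1, 1, 0, 0, 0, 0, 1, -1;
    1, 0, 1, 0, 1, 0, 0, -1;
    -1, 0, 0, 1, 1, 0, -1, 0;
    0, 0, -1, -1, 1, -1, 0, 0;
    0, 0, 0, 0, 1, 1, 1, 1;
    0, -1, 0, 1, 0, -1, 1, 0;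
    0, 1, 1, 0, 0, -1, 0, 1]

/-- The generator `T4`. -/
noncomputable def T4 : Matrix (Fin 8) (Fin 8) ℝ :=
  (1/2 : ℝ) • !![
    1, 0, -1, 0, 0, 1, -1, 0;
    0, 1, 0, 1, 1, 0, 0, -1;
    1, 0, 1, 0, 1, 0, 0, 1;
    0, -1, 0, 1, 0, -1, -1, 0;
    0, -1, -1, 0, 1, 0, 1, 0;
    -1, 0, 0, 1, 0, 1, 0, 1;
    1, 0, 0, 1, -1, 0, 1, 0;
    0, 1, -1, 0, 0, -1, 0, 1]

namespace E8Aux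

def N0 : Matrix (Fin 8) (Fin 8) ℤ := !![
    0, 0, 0, 0, 0, 0, 0, 1;
    0, 0, 0, 0, 0, -1, 2, -1;
    -1, -1, 1, 1, -1, 0, 0, 0;
    1, -1, -1, 1, -1, 1, 0, 0;
    -1, 0, 0, 0, 0, 1, 0, -1;
    -1, 0, 0, 0, 0, 0, 0, 1;
    0, 1, -1, 1, -1, 0, 0, 0;
    0, -1, -1, 1, 1, -1, 0, 0]

def Mi : Matrix (Fin 8) (Fin 8) ℤ := !![
    2, 0, 0, 0, 0, -2, 0, 0;
    3, 0, 0, -1, 1, -2, 1, 0;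
    4, 0, 1, -1, 1, -3, 0, 0;
    6, 0, 1, -1, 2, -4, 1, 1;
    5, 0, 0, -1, 2, -3, 0, 1;
    4, 0, 0, 0, 2, -2, 0, 0;
    3, 1, 0, 0, 1, -1, 0, 0;
    2, 0, 0, 0, 0, 0, 0, 0]

def A1 : Matrix (Fin 8) (Fin 8) ℤ := !![
    1, 1, 0, 0, -1, 1, 0, 0;
    -1, 1, 0, 0, -1, -1, 0, 0;
    0, 0, 1, -1, 0, 0, 1, 1;
    0, 0, 1, 1, 0, 0, 1, -1;
    1, 1, 0, 0, 1, -1, 0, 0;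
    -1, 1, 0, 0, 1, 1, 0, 0;
    0, 0, -1, -1, 0, 0, 1, -1;
    0, 0, -1, 1, 0, 0, 1, 1]

def C1 : Matrix (Fin 8) (Fin 8) ℤ := !![
    1, 0, 0, 0, 0, -1, 0, 2;
    1, 1, 0, -1, 1, -2, 1, 2;
    1, 0, 0, 0, 1, -3, 1, 3;
    2, 1, -1, 0, 1, -4, 2, 4;
    2, 0, -1, 0, 1, -3, 2, 3;
    1, 0, 0, 0, 0, -2, 2, 2;
    1, 0, 0, 0, 0, -2, 2, 1;
    0, 0, 0, 0, 0, -1, 1, 1]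

def D1 : Matrix (Fin 8) (Fin 8) ℤ := !![
    0, 0, 0, 0, 0, 1, 0, -2;
    -1, 0, 0, 1, -1, 2, -1, -2;
    -1, 0, 1, 0, -1, 3, -1, -3;
    -2, -1, 1, 1, -1, 4, -2, -4;
    -2, 0, 1, 0, 0, 3, -2, -3;
    -1, 0, 0, 0, 0, 3, -2, -2;
    -1, 0, 0, 0, 0, 2, -1, -1;
    0, 0, 0, 0, 0, 1, -1, 0]

def A2 : Matrix (Fin 8) (Fin 8) ℤ := !![
    1, 1, 0, 0, 1, 1, 0, 0;
    -1, 1, 0, 0, -1, 1, 0, 0;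
    0, 0, 1, -1, 0, 0, 1, -1;
    0, 0, 1, 1, 0, 0, -1, -1;
    -1, 1, 0, 0, 1, -1, 0, 0;
    -1, -1, 0, 0, 1, 1, 0, 0;
    0, 0, -1, 1, 0, 0, 1, -1;
    0, 0, 1, 1, 0, 0, 1, 1]

def C2 : Matrix (Fin 8) (Fin 8) ℤ := !![
    0, 0, 0, 0, 0, -1, 2, 0;
    0, 1, -1, 0, 0, -1, 3, -1;
    -1, 1, 0, 0, 0, -2, 4, -1;
    -1, 1, -1, 1, -1, -2, 6, -2;
    -1, 0, -1, 1, 0, -2, 5, -2;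
    -1, 0, 0, 0, 0, -1, 4, -2;
    -1, 0, 0, 0, 0, -1, 3, -1;
    -1, 0, 0, 0, 0, 0, 1, 0]

def D2 : Matrix (Fin 8) (Fin 8) ℤ := !![
    1, 0, 0, 0, 0, 1, -2, 0;
    0, 0, 1, 0, 0, 1, -3, 1;
    1, -1, 1, 0, 0, 2, -4, 1;
    1, -1, 1, 0, 1, 2, -6, 2;
    1, 0, 1, -1, 1, 2, -5, 2;
    1, 0, 0, 0, 0, 2, -4, 2;
    1, 0, 0, 0, 0, 1, -2, 1;
    1, 0, 0, 0, 0, 0, -1, 1]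

def A3 : Matrix (Fin 8) (Fin 8) ℤ := !![
    1, 1, -1, 1, 0, 0, 0, 0;
    -1, 1, 0, 0, 0, 0, 1, -1;
    1, 0, 1, 0, 1, 0, 0, -1;
    -1, 0, 0, 1, 1, 0, -1, 0;
    0, 0, -1, -1, 1, -1, 0, 0;
    0, 0, 0, 0, 1, 1, 1, 1;
    0, -1, 0, 1, 0, -1, 1, 0;
    0, 1, 1, 0, 0, -1, 0, 1]

def C3 : Matrix (Fin 8) (Fin 8) ℤ := !![
    2, 0, 0, -1, 0, 0, 1, 0;
    3, 1, -1, -1, 0, 0, 1, 0;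
    3, 1, 0, -2, 0, 0, 2, 0;
    5, 1, -1, -2, 0, 0, 3, -1;
    4, 1, -1, -2, 1, -1, 3, -1;
    3, 1, -1, -2, 1, 0, 2, -1;
    2, 1, -1, -1, 0, 0, 2, -1;
    1, 0, -1, 0, 0, 0, 1, 0]

def D3 : Matrix (Fin 8) (Fin 8) ℤ := !![
    -1, 0, 0, 1, 0, 0, -1, 0;
    -3, 0, 1, 1, 0, 0, -1, 0;
    -3, -1, 1, 2, 0, 0, -2, 0;
    -5, -1, 1, 3, 0, 0, -3, 1;
    -4, -1, 1, 2, 0, 1, -3, 1;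
    -3, -1, 1, 2, -1, 1, -2, 1;
    -2, -1, 1, 1, 0, 0, -1, 1;
    -1, 0, 1, 0, 0, 0, -1, 1]

def A4 : Matrix (Fin 8) (Fin 8) ℤ := !![
    1, 0, -1, 0, 0, 1, -1, 0;
    0, 1, 0, 1, 1, 0, 0, -1;
    1, 0, 1, 0, 1, 0, 0, 1;
    0, -1, 0, 1, 0, -1, -1, 0;
    0, -1, -1, 0, 1, 0, 1, 0;
    -1, 0, 0, 1, 0, 1, 0, 1;
    1, 0, 0, 1, -1, 0, 1, 0;
    0, 1, -1, 0, 0, -1, 0, 1]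

def C4 : Matrix (Fin 8) (Fin 8) ℤ := !![
    0, 1, 1, -2, 1, 0, 0, 1;
    0, 2, 0, -2, 1, 0, 0, 2;
    -1, 2, 1, -3, 2, 0, 0, 2;
    0, 3, 0, -4, 3, 0, 0, 3;
    0, 3, 0, -4, 3, 0, 0, 2;
    0, 2, 0, -3, 2, 1, -1, 2;
    0, 1, 0, -2, 1, 1, 0, 1;
    0, 0, 0, -1, 1, 0, 0, 1]

def D4 : Matrix (Fin 8) (Fin 8) ℤ := !![
    1, -1, -1, 2, -1, 0, 0, -1;
    0, -1, 0, 2, -1, 0, 0, -2;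
    1, -2, 0, 3, -2, 0, 0, -2;
    0, -3, 0, 5, -3, 0, 0, -3;
    0, -3, 0, 4, -2, 0, 0, -2;
    0, -2, 0, 3, -2, 0, 1, -2;
    0, -1, 0, 2, -1, -1, 1, -1;
    0, 0, 0, 1, -1, 0, 0, 0]


section
variable {α : Type*} (a0 a1 a2 a3 a4 a5 a6 a7 : α)
lemma cv0 : ![a0,a1,a2,a3,a4,a5,a6,a7] (0:Fin 8) = a0 := rfl
lemma cv1 : ![a0,a1,a2,a3,a4,a5,a6,a7] (1:Fin 8) = a1 := rfl
lemma cv2 : ![a0,a1,a2,a3,a4,a5,a6,a7] (2:Fin 8) = a2 := rfl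
lemma cv3 : ![a0,a1,a2,a3,a4,a5,a6,a7] (3:Fin 8) = a3 := rfl
lemma cv4 : ![a0,a1,a2,a3,a4,a5,a6,a7] (4:Fin 8) = a4 := rfl
lemma cv5 : ![a0,a1,a2,a3,a4,a5,a6,a7] (5:Fin 8) = a5 := rfl
lemma cv6 : ![a0,a1,a2,a3,a4,a5,a6,a7] (6:Fin 8) = a6 := rfl
lemma cv7 : ![a0,a1,a2,a3,a4,a5,a6,a7] (7:Fin 8) = a7 := rfl
end

/-- cast map -/
noncomputable def cm (A : Matrix (Fin 8) (Fin 8) ℤ) : Matrix (Fin 8) (Fin 8) ℝ :=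
  A.map (fun z : ℤ => (z : ℝ))

lemma cm_mul (A B : Matrix (Fin 8) (Fin 8) ℤ) : cm (A * B) = cm A * cm B := by
  ext i j
  simp [cm, Matrix.map_apply, Matrix.mul_apply]

lemma cm_smul (z : ℤ) (A : Matrix (Fin 8) (Fin 8) ℤ) :
    cm (z • A) = (z : ℝ) • cm A := by
  ext i j
  show (((z • A) i j : ℤ) : ℝ) = (z : ℝ) • ((A i j : ℤ) : ℝ)
  rw [Matrix.smul_apply, smul_eq_mul, smul_eq_mul]
  push_cast
  ring

lemma cm_one : cm 1 = 1 := by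
  ext i j
  simp [cm, Matrix.map_apply, Matrix.one_apply, apply_ite]

lemma cm_transpose (A : Matrix (Fin 8) (Fin 8) ℤ) : cm Aᵀ = (cm A)ᵀ := by
  ext i j
  simp [cm, Matrix.map_apply]

lemma Mgen_eq : Mgen = (1/2 : ℝ) • cm N0 := by
  have h : cm N0 = !![
    0, 0, 0, 0, 0, 0, 0, 1;
    0, 0, 0, 0, 0, -1, 2, -1;
    -1, -1, 1, 1, -1, 0, 0, 0;
    1, -1, -1, 1, -1, 1, 0, 0;
    -1, 0, 0, 0, 0, 1, 0, -1;
    -1, 0, 0, 0, 0, 0, 0, 1;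
    0, 1, -1, 1, -1, 0, 0, 0;
    0, -1, -1, 1, 1, -1, 0, 0] := by
    ext i j
    fin_cases i <;> fin_cases j <;>
      simp only [cm, N0, Matrix.map_apply, Matrix.of_apply,
        cv0, cv1, cv2, cv3, cv4, cv5, cv6, cv7] <;> norm_num
  rw [h, Mgen]

lemma Mi_left_inv : cm Mi * Mgen = 1 := by
  have h : Mi * N0 = (2 : ℤ) • 1 := by decide
  rw [Mgen_eq, mul_smul_comm, ← cm_mul, h, cm_smul, cm_one, smul_smul]
  norm_num

lemma Mgen_inv_eq : Mgen⁻¹ = cm Mi := inv_eq_left_inv Mi_left_inv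

/-- Main reusable lemma. -/
lemma key (A C D : Matrix (Fin 8) (Fin 8) ℤ) (T : Matrix (Fin 8) (Fin 8) ℝ)
    (hT : T = (1/2 : ℝ) • cm A)
    (h1 : Aᵀ * A = (4 : ℤ) • 1)
    (h2 : Mi * A * N0 = (4 : ℤ) • C)
    (h3 : C * D = 1) :
    Tᵀ * T = 1 ∧
      (∃ C' : Matrix (Fin 8) (Fin 8) ℤ,
        Mgen⁻¹ * T * Mgen = C'.map (fun z : ℤ => (z : ℝ))) ∧
      (∃ D' : Matrix (Fin 8) (Fin 8) ℤ,
        (Mgen⁻¹ * T * Mgen)⁻¹ = D'.map (fun z : ℤ => (z : ℝ))) := by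
  have hCmap : Mgen⁻¹ * T * Mgen = cm C := by
    rw [Mgen_inv_eq, hT, Mgen_eq]
    simp only [mul_smul_comm, smul_mul_assoc, smul_smul, ← cm_mul]
    rw [h2, cm_smul, smul_smul]
    norm_num
  refine ⟨?_, ⟨C, hCmap⟩, ⟨D, ?_⟩⟩
  · rw [hT, Matrix.transpose_smul, ← cm_transpose]
    simp only [mul_smul_comm, smul_mul_assoc, smul_smul, ← cm_mul]
    rw [h1, cm_smul, cm_one, smul_smul]
    norm_num
  · rw [hCmap]
    have : cm C * cm D = 1 := by rw [← cm_mul, h3, cm_one]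
    exact inv_eq_right_inv this

lemma T1_eq : T1 = (1/2 : ℝ) • cm A1 := by
  have h : cm A1 = !![
    1, 1, 0, 0, -1, 1, 0, 0;
    -1, 1, 0, 0, -1, -1, 0, 0;
    0, 0, 1, -1, 0, 0, 1, 1;
    0, 0, 1, 1, 0, 0, 1, -1;
    1, 1, 0, 0, 1, -1, 0, 0;
    -1, 1, 0, 0, 1, 1, 0, 0;
    0, 0, -1, -1, 0, 0, 1, -1;
    0, 0, -1, 1, 0, 0, 1, 1] := by
    ext i j
    fin_cases i <;> fin_cases j <;>
      simp only [cm, A1, Matrix.map_apply, Matrix.of_apply,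
        cv0, cv1, cv2, cv3, cv4, cv5, cv6, cv7] <;> norm_num
  rw [h, T1]

lemma T2_eq : T2 = (1/2 : ℝ) • cm A2 := by
  have h : cm A2 = !![
    1, 1, 0, 0, 1, 1, 0, 0;
    -1, 1, 0, 0, -1, 1, 0, 0;
    0, 0, 1, -1, 0, 0, 1, -1;
    0, 0, 1, 1, 0, 0, -1, -1;
    -1, 1, 0, 0, 1, -1, 0, 0;
    -1, -1, 0, 0, 1, 1, 0, 0;
    0, 0, -1, 1, 0, 0, 1, -1;
    0, 0, 1, 1, 0, 0, 1, 1] := by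
    ext i j
    fin_cases i <;> fin_cases j <;>
      simp only [cm, A2, Matrix.map_apply, Matrix.of_apply,
        cv0, cv1, cv2, cv3, cv4, cv5, cv6, cv7] <;> norm_num
  rw [h, T2]

lemma T3_eq : T3 = (1/2 : ℝ) • cm A3 := by
  have h : cm A3 = !![
    1, 1, -1, 1, 0, 0, 0, 0;
    -1, 1, 0, 0, 0, 0, 1, -1;
    1, 0, 1, 0, 1, 0, 0, -1;
    -1, 0, 0, 1, 1, 0, -1, 0;
    0, 0, -1, -1, 1, -1, 0, 0;
    0, 0, 0, 0, 1, 1, 1, 1;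
    0, -1, 0, 1, 0, -1, 1, 0;
    0, 1, 1, 0, 0, -1, 0, 1] := by
    ext i j
    fin_cases i <;> fin_cases j <;>
      simp only [cm, A3, Matrix.map_apply, Matrix.of_apply,
        cv0, cv1, cv2, cv3, cv4, cv5, cv6, cv7] <;> norm_num
  rw [h, T3]

lemma T4_eq : T4 = (1/2 : ℝ) • cm A4 := by
  have h : cm A4 = !![
    1, 0, -1, 0, 0, 1, -1, 0;
    0, 1, 0, 1, 1, 0, 0, -1;
    1, 0, 1, 0, 1, 0, 0, 1;
    0, -1, 0, 1, 0, -1, -1, 0;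
    0, -1, -1, 0, 1, 0, 1, 0;
    -1, 0, 0, 1, 0, 1, 0, 1;
    1, 0, 0, 1, -1, 0, 1, 0;
    0, 1, -1, 0, 0, -1, 0, 1] := by
    ext i j
    fin_cases i <;> fin_cases j <;>
      simp only [cm, A4, Matrix.map_apply, Matrix.of_apply,
        cv0, cv1, cv2, cv3, cv4, cv5, cv6, cv7] <;> norm_num
  rw [h, T4]

end E8Aux

open E8Aux in
/-- Each of `T1, T2, T3, T4` is orthogonal and is an automorphism
of the E₈ lattice `Λ = Mgen · ℤ⁸`: the matrix `C = Mgen⁻¹ * T * Mgen` has integer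
entries and its inverse also has integer entries, i.e. `C ∈ GL(8,ℤ)`. -/
theorem generators_orthogonal_lattice_automorphisms :
    ∀ T ∈ ({T1, T2, T3, T4} : Set (Matrix (Fin 8) (Fin 8) ℝ)),
      Tᵀ * T = 1 ∧
      (∃ C : Matrix (Fin 8) (Fin 8) ℤ,
        Mgen⁻¹ * T * Mgen = C.map (fun z : ℤ => (z : ℝ))) ∧
      (∃ D : Matrix (Fin 8) (Fin 8) ℤ,
        (Mgen⁻¹ * T * Mgen)⁻¹ = D.map (fun z : ℤ => (z : ℝ))) := by
  intro T hT
  simp only [Set.mem_insert_iff, Set.mem_singleton_iff] at hT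
  rcases hT with h | h | h | h <;> subst h
  · exact E8Aux.key A1 C1 D1 T1 T1_eq (by decide) (by decide) (by decide)
  · exact E8Aux.key A2 C2 D2 T2 T2_eq (by decide) (by decide) (by decide)
  · exact E8Aux.key A3 C3 D3 T3 T3_eq (by decide) (by decide) (by decide)
  · exact E8Aux.key A4 C4 D4 T4 T4_eq (by decide) (by decide) (by decide)
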